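/- Let k(x,x') = ∑_{j=1}^∞ λ_j φ_j(x)φ_j(x') be a Mercer expansion with λ_j ≥ 0 and let φ̄_j = sup_x |φ_j(x)| be finite with ∑ λ_j φ̄_j² < ∞. Then for any m and any points x₁,...,x_t, the trace of the Nyström error matrix E = K_{X,X} - K_{Z,X}ᵀ K_{Z,Z}^{-1} K_{Z,X}, when the inducing features are the first m eigenfunctions, satisfies Tr(E) ≤ t · ∑_{j=m+1}^∞ λ_j φ̄_j², with the pointwise identity E_{ii} = ∑_{j=m+1}^∞ λ_j φ_j(x_i)². -/

import Mathlib

open Matrix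

/-- Nyström error for inducing-feature approximations: with a Mercer expansion
k(x,x') = ∑_j λ_j φ_j(x)φ_j(x') and inducing features the first m eigenfunctions,
the error matrix E = K_{XX} - K_{ZX}ᵀ K_{ZZ}⁻¹ K_{ZX} satisfies
E_{aa} = ∑_{j>m} λ_j φ_j(x_a)² and Tr(E) ≤ t·∑_{j>m} λ_j φ̄_j². -/
theorem nystrom_trace_bound {X : Type*} (k : X → X → ℝ)
    (lam : ℕ → ℝ) (φ : ℕ → X → ℝ) (φb : ℕ → ℝ)
    (hlam : ∀ j, 0 ≤ lam j)
    (hφb : ∀ j x, |φ j x| ≤ φb j)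
    (hsum : Summable fun j => lam j * (φb j) ^ 2)
    (hk : ∀ x x', k x x' = ∑' j : ℕ, lam j * φ j x * φ j x')
    (m t : ℕ) (hmpos : ∀ j < m, 0 < lam j) (x : Fin t → X) :
    let KXX : Matrix (Fin t) (Fin t) ℝ := fun a b => k (x a) (x b)
    let KZX : Matrix (Fin m) (Fin t) ℝ := fun i a => lam i * φ i (x a)
    let KZZ : Matrix (Fin m) (Fin m) ℝ := Matrix.diagonal fun i : Fin m => lam i
    let E : Matrix (Fin t) (Fin t) ℝ := KXX - KZXᵀ * KZZ⁻¹ * KZX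
    (∀ a : Fin t, E a a = ∑' j : ℕ, lam (m + j) * (φ (m + j) (x a)) ^ 2) ∧
      Matrix.trace E ≤ (t : ℝ) * ∑' j : ℕ, lam (m + j) * (φb (m + j)) ^ 2 := by
  intro KXX KZX KZZ E
  -- inverse of the diagonal matrix
  have hne : ∀ i : Fin m, lam i ≠ 0 := fun i => (hmpos i i.isLt).ne'
  have hinv : KZZ⁻¹ = Matrix.diagonal fun i : Fin m => (lam i)⁻¹ := by
    apply Matrix.inv_eq_right_inv
    simp only [KZZ, Matrix.diagonal_mul_diagonal]
    rw [show (fun i : Fin m => lam i * (lam i)⁻¹) = fun _ => (1:ℝ) from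
      funext fun i => mul_inv_cancel₀ (hne i), Matrix.diagonal_one]
  -- summability of the pointwise series
  have hsummand : ∀ a b : Fin t, Summable fun j => lam j * φ j (x a) * φ j (x b) := by
    intro a b
    apply Summable.of_abs
    apply Summable.of_nonneg_of_le (fun j => abs_nonneg _) _ hsum
    intro j
    have h1 := hφb j (x a)
    have h2 := hφb j (x b)
    have hb : 0 ≤ φb j := le_trans (abs_nonneg _) h1
    calc |lam j * φ j (x a) * φ j (x b)| = lam j * (|φ j (x a)| * |φ j (x b)|) := by
          rw [abs_mul, abs_mul, abs_of_nonneg (hlam j), mul_assoc]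
      _ ≤ lam j * (φb j * φb j) := by
          apply mul_le_mul_of_nonneg_left _ (hlam j)
          exact mul_le_mul h1 h2 (abs_nonneg _) hb
      _ = lam j * (φb j) ^ 2 := by ring
  -- entries of the low-rank part
  have hlow : ∀ a b : Fin t, (KZXᵀ * KZZ⁻¹ * KZX) a b
      = ∑ i : Fin m, lam i * φ i (x a) * φ i (x b) := by
    intro a b
    rw [hinv]
    rw [Matrix.mul_assoc, Matrix.mul_apply]
    apply Finset.sum_congr rfl
    intro i _
    rw [Matrix.diagonal_mul]
    simp only [Matrix.transpose_apply, KZX]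
    field_simp [hne i]
    change lam i * φ i (x a) * φ i (x b) = _; ring
  -- entries of E
  have hE : ∀ a b : Fin t, E a b = ∑' j : ℕ, lam (m + j) * φ (m + j) (x a) * φ (m + j) (x b) := by
    intro a b
    have hsplit := Summable.sum_add_tsum_nat_add m (hsummand a b)
    simp only [E, Matrix.sub_apply]
    simp only [hlow, KXX, hk]
    rw [← hsplit]
    have : ∑ i : Fin m, lam i * φ i (x a) * φ i (x b)
        = ∑ i ∈ Finset.range m, lam i * φ i (x a) * φ i (x b) := by
      rw [Finset.sum_range fun i => lam i * φ i (x a) * φ i (x b)]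
    rw [this]
    have : (fun j => lam (j + m) * φ (j + m) (x a) * φ (j + m) (x b))
        = fun j => lam (m + j) * φ (m + j) (x a) * φ (m + j) (x b) := by
      funext j; rw [add_comm j m]
    simp [this]
  have hEd : ∀ a : Fin t, E a a = ∑' j : ℕ, lam (m + j) * (φ (m + j) (x a)) ^ 2 := by
    intro a
    rw [hE a a]
    congr 1; funext j; ring
  refine ⟨hEd, ?_⟩
  -- trace bound
  have htail : Summable fun j => lam (m + j) * (φb (m + j)) ^ 2 := by
    have := (summable_nat_add_iff m).2 hsum
    simpa [add_comm] using this
  have hbound : ∀ a : Fin t, E a a ≤ ∑' j : ℕ, lam (m + j) * (φb (m + j)) ^ 2 := by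
    intro a
    rw [hEd a]
    apply Summable.tsum_le_tsum _ _ htail
    · intro j
      apply mul_le_mul_of_nonneg_left _ (hlam _)
      have h1 := hφb (m + j) (x a)
      calc (φ (m + j) (x a)) ^ 2 = |φ (m + j) (x a)| ^ 2 := (sq_abs _).symm
        _ ≤ (φb (m + j)) ^ 2 := by
            apply pow_le_pow_left₀ (abs_nonneg _) h1 2
    · -- summability of the diagonal tail
      have hs := (summable_nat_add_iff m).2 (hsummand a a)
      have : (fun j => lam (j + m) * φ (j + m) (x a) * φ (j + m) (x a))
          = fun j => lam (m + j) * (φ (m + j) (x a)) ^ 2 := by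
        funext j; rw [add_comm j m]; ring
      rwa [this] at hs
  calc Matrix.trace E = ∑ a : Fin t, E a a := rfl
    _ ≤ ∑ _a : Fin t, ∑' j : ℕ, lam (m + j) * (φb (m + j)) ^ 2 :=
        Finset.sum_le_sum fun a _ => hbound a
    _ = (t : ℝ) * ∑' j : ℕ, lam (m + j) * (φb (m + j)) ^ 2 := by
        simp [Finset.sum_const, nsmul_eq_mul]
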